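/- Let P = {p_k : k ≥ 1} be a probability distribution on a countable alphabet. Then P belongs to Domain 1 (i.e., limsup_{n→∞} t_n = c_P for some finite constant c_P > 0) if and only if (1) the effective cardinality K = #{k : p_k > 0} is infinite, and (2) there exists a constant u_P > 0 such that t_n ≤ u_P for all n. -/
import Mathlib


open Filter Topology

/-- The tail index `t_n = n * ∑_k p_k (1 - p_k)^n`. -/
noncomputable def tailIndex (p : ℕ → ℝ) (n : ℕ) : ℝ :=
  (n : ℝ) * ∑' k, p k * (1 - p k) ^ n

section Aux

variable {p : ℕ → ℝ}

lemma psummable (hp : ∀ k, 0 ≤ p k) (hsum : ∑' k, p k = 1) : Summable p := by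
  by_contra h
  rw [tsum_eq_zero_of_not_summable h] at hsum
  norm_num at hsum

lemma p_le_one (hp : ∀ k, 0 ≤ p k) (hsum : ∑' k, p k = 1) (k : ℕ) : p k ≤ 1 := by
  have h := Summable.le_tsum (psummable hp hsum) k (fun j _ => hp j)
  rw [hsum] at h
  exact h

lemma term_nonneg (hp : ∀ k, 0 ≤ p k) (hsum : ∑' k, p k = 1) (n k : ℕ) :
    0 ≤ p k * (1 - p k) ^ n :=
  mul_nonneg (hp k) (pow_nonneg (by linarith [p_le_one hp hsum k]) n)

lemma term_le (hp : ∀ k, 0 ≤ p k) (hsum : ∑' k, p k = 1) (n k : ℕ) :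
    p k * (1 - p k) ^ n ≤ p k := by
  have h1 : (1 - p k) ^ n ≤ 1 :=
    pow_le_one₀ (by linarith [p_le_one hp hsum k]) (by linarith [hp k])
  calc p k * (1 - p k) ^ n ≤ p k * 1 := by
        exact mul_le_mul_of_nonneg_left h1 (hp k)
    _ = p k := mul_one _

lemma summable_term (hp : ∀ k, 0 ≤ p k) (hsum : ∑' k, p k = 1) (n : ℕ) :
    Summable (fun k => p k * (1 - p k) ^ n) :=
  Summable.of_nonneg_of_le (term_nonneg hp hsum n) (term_le hp hsum n) (psummable hp hsum)

lemma single_le_tail (hp : ∀ k, 0 ≤ p k) (hsum : ∑' k, p k = 1) (n k : ℕ) :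
    (n : ℝ) * (p k * (1 - p k) ^ n) ≤ tailIndex p n := by
  have h := Summable.le_tsum (summable_term hp hsum n) k (fun j _ => term_nonneg hp hsum n j)
  exact mul_le_mul_of_nonneg_left h (Nat.cast_nonneg n)

lemma tail_nonneg (hp : ∀ k, 0 ≤ p k) (hsum : ∑' k, p k = 1) (n : ℕ) :
    0 ≤ tailIndex p n :=
  mul_nonneg (Nat.cast_nonneg n) (tsum_nonneg (term_nonneg hp hsum n))

/-- If the support is finite, the tail index tends to 0. -/
lemma tendsto_zero_of_finite (hp : ∀ k, 0 ≤ p k) (hsum : ∑' k, p k = 1)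
    (hfin : {k | 0 < p k}.Finite) :
    Tendsto (fun n => tailIndex p n) atTop (nhds 0) := by
  have heq : ∀ n, tailIndex p n = ∑ k ∈ hfin.toFinset, (n : ℝ) * (p k * (1 - p k) ^ n) := by
    intro n
    rw [tailIndex, ← Finset.mul_sum]
    congr 1
    refine tsum_eq_sum (fun k hk => ?_)
    have hk0 : p k = 0 := by
      rw [Set.Finite.mem_toFinset] at hk
      simp only [Set.mem_setOf_eq, not_lt] at hk
      linarith [hp k]
    simp [hk0]
  have : Tendsto (fun n : ℕ => ∑ k ∈ hfin.toFinset, (n : ℝ) * (p k * (1 - p k) ^ n))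
      atTop (nhds 0) := by
    have hterm : ∀ k ∈ hfin.toFinset,
        Tendsto (fun n : ℕ => (n : ℝ) * (p k * (1 - p k) ^ n)) atTop (nhds 0) := by
      intro k hk
      rw [Set.Finite.mem_toFinset] at hk
      have hk1 : p k ≤ 1 := p_le_one hp hsum k
      have hr0 : 0 ≤ 1 - p k := by linarith
      have hr1 : ‖(1 - p k : ℝ)‖ < 1 := by
        rw [Real.norm_eq_abs, abs_of_nonneg hr0]
        simp only [Set.mem_setOf_eq] at hk
        linarith
      have hsumm := summable_pow_mul_geometric_of_norm_lt_one (R := ℝ) 1 hr1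
      have ht := hsumm.tendsto_atTop_zero
      have ht' : Tendsto (fun n : ℕ => p k * ((n : ℝ) ^ 1 * (1 - p k) ^ n)) atTop (nhds 0) := by
        have := ht.const_mul (p k)
        simpa using this
      refine ht'.congr (fun n => ?_)
      ring
    have := tendsto_finset_sum hfin.toFinset hterm
    simpa using this
  exact this.congr (fun n => (heq n).symm)

/-- If the support is infinite, frequently `tailIndex p n ≥ exp (-4)`. -/
lemma frequently_ge_exp (hp : ∀ k, 0 ≤ p k) (hsum : ∑' k, p k = 1)
    (hinf : {k | 0 < p k}.Infinite) :
    ∃ᶠ n in atTop, Real.exp (-4) ≤ tailIndex p n := by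
  rw [Filter.frequently_atTop]
  intro N
  set ε : ℝ := min (1 / 2) (1 / (N + 1)) with hε
  have hε0 : 0 < ε := by positivity
  obtain ⟨K, hK⟩ := Metric.tendsto_atTop.1 (psummable hp hsum).tendsto_atTop_zero ε hε0
  obtain ⟨k, hkmem, hkK⟩ := hinf.exists_gt K
  have hq0 : 0 < p k := hkmem
  set q : ℝ := p k with hqdef
  have hqε : q < ε := by
    have := hK k (le_of_lt hkK)
    rwa [Real.dist_eq, sub_zero, abs_of_pos hq0] at this
  have hq2 : q ≤ 1 / 2 := le_of_lt (lt_of_lt_of_le hqε (min_le_left _ _))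
  have hqN : q ≤ 1 / (N + 1) := le_of_lt (lt_of_lt_of_le hqε (min_le_right _ _))
  set n : ℕ := ⌈q⁻¹⌉₊ with hn
  have hnge : q⁻¹ ≤ (n : ℝ) := Nat.le_ceil _
  have hnlt : (n : ℝ) < q⁻¹ + 1 := Nat.ceil_lt_add_one (by positivity)
  have hq1 : (1 : ℝ) ≤ q⁻¹ := by
    rw [le_inv_comm₀ one_pos hq0]
    linarith
  have hnq1 : 1 ≤ (n : ℝ) * q := by
    rw [← inv_mul_cancel₀ (ne_of_gt hq0)]
    exact mul_le_mul_of_nonneg_right hnge (le_of_lt hq0)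
  have hnq2 : (n : ℝ) * q ≤ 2 := by
    have h1 : (n : ℝ) * q < (q⁻¹ + 1) * q := by
      exact mul_lt_mul_of_pos_right hnlt hq0
    have h2 : (q⁻¹ + 1) * q = 1 + q := by
      field_simp
    nlinarith
  refine ⟨n, ?_, ?_⟩
  · -- N ≤ n
    have hNq : (N : ℝ) + 1 ≤ q⁻¹ := by
      rw [le_inv_comm₀ (by positivity) hq0]
      rw [inv_eq_one_div]
      exact hqN
    have : (N : ℝ) ≤ (n : ℝ) := by linarith
    exact_mod_cast this
  · -- exp(-4) ≤ tailIndex p n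
    have hexp : Real.exp (-(2 * q)) ≤ 1 - q := by
      have h1 : 1 + 2 * q ≤ Real.exp (2 * q) := by
        have := Real.add_one_le_exp (2 * q)
        linarith
      have h2 : Real.exp (-(2 * q)) ≤ (1 + 2 * q)⁻¹ := by
        rw [Real.exp_neg]
        exact inv_anti₀ (by positivity) h1
      have h3 : (1 + 2 * q)⁻¹ ≤ 1 - q := by
        rw [inv_eq_one_div, div_le_iff₀ (by positivity)]
        nlinarith
      linarith
    have hpow : Real.exp (-4) ≤ (1 - q) ^ n := by
      have h1 : Real.exp (-(2 * q)) ^ n ≤ (1 - q) ^ n :=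
        pow_le_pow_left₀ (Real.exp_nonneg _) hexp n
      have h2 : Real.exp (-(2 * q)) ^ n = Real.exp ((n : ℝ) * (-(2 * q))) := by
        rw [Real.exp_nat_mul]
      have h3 : Real.exp (-4) ≤ Real.exp ((n : ℝ) * (-(2 * q))) := by
        apply Real.exp_le_exp.2
        nlinarith
      linarith [h2 ▸ h1]
    have hfinal : (1 - q) ^ n ≤ tailIndex p n := by
      have h1 : (1 - q) ^ n ≤ ((n : ℝ) * q) * (1 - q) ^ n :=
        le_mul_of_one_le_left (pow_nonneg (by linarith) n) hnq1
      have h2 := single_le_tail hp hsum n k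
      calc (1 - q) ^ n ≤ (n : ℝ) * q * (1 - q) ^ n := h1
        _ = (n : ℝ) * (q * (1 - q) ^ n) := by ring
        _ ≤ tailIndex p n := h2
    linarith

end Aux

/-- `P` belongs to Domain 1 (`limsup t_n` is a finite positive constant) if and only if
(1) the effective cardinality is infinite, and (2) `t_n` is bounded above by some
constant `u_P > 0`. -/
theorem stmt8 (p : ℕ → ℝ) (hp : ∀ k, 0 ≤ p k) (hsum : ∑' k, p k = 1) :
    (∃ c : ℝ, 0 < c ∧
        Filter.limsup (fun n : ℕ => ((tailIndex p n : ℝ) : EReal)) atTop = (c : EReal)) ↔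
      ({k | 0 < p k}.Infinite ∧ ∃ u : ℝ, 0 < u ∧ ∀ n : ℕ, tailIndex p n ≤ u) := by
  constructor
  · rintro ⟨c, hc, hlim⟩
    constructor
    · by_contra hfin
      rw [Set.not_infinite] at hfin
      have ht := tendsto_zero_of_finite hp hsum hfin
      have htE : Tendsto (fun n : ℕ => ((tailIndex p n : ℝ) : EReal)) atTop
          (nhds (((0 : ℝ) : EReal))) := (EReal.tendsto_coe).2 ht
      have h0 := htE.limsup_eq
      rw [hlim] at h0
      have : c = 0 := by exact_mod_cast h0
      linarith
    · have hlt : Filter.limsup (fun n : ℕ => ((tailIndex p n : ℝ) : EReal)) atTop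
          < ((c + 1 : ℝ) : EReal) := by
        rw [hlim]
        exact_mod_cast (by linarith : c < c + 1)
      have hev := Filter.eventually_lt_of_limsup_lt hlt
      rw [Filter.eventually_atTop] at hev
      obtain ⟨N, hN⟩ := hev
      set M := (Finset.range (N + 1)).sup' (by simp) (tailIndex p) with hM
      refine ⟨max (c + 1) M, lt_of_lt_of_le (by linarith) (le_max_left _ _), fun n => ?_⟩
      rcases le_or_gt N n with h | h
      · have h1 := hN n h
        have h2 : tailIndex p n < c + 1 := by exact_mod_cast h1
        exact le_trans (le_of_lt h2) (le_max_left _ _)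
      · have hmem : n ∈ Finset.range (N + 1) := Finset.mem_range.2 (by omega)
        exact le_trans (Finset.le_sup' (tailIndex p) hmem) (le_max_right _ _)
  · rintro ⟨hinf, u, hu, hb⟩
    set L := Filter.limsup (fun n : ℕ => ((tailIndex p n : ℝ) : EReal)) atTop with hL
    have hle : L ≤ ((u : ℝ) : EReal) := by
      apply Filter.limsup_le_of_le Filter.isCobounded_le_of_bot
      exact Filter.Eventually.of_forall (fun n => by exact_mod_cast hb n)
    have hge : ((Real.exp (-4) : ℝ) : EReal) ≤ L := by
      apply Filter.le_limsup_of_frequently_le'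
      exact (frequently_ge_exp hp hsum hinf).mono (fun n hn => by exact_mod_cast hn)
    have hne_top : L ≠ ⊤ := ne_top_of_le_ne_top (EReal.coe_ne_top u) hle
    have hbotlt : (⊥ : EReal) < L := lt_of_lt_of_le (EReal.bot_lt_coe _) hge
    have hne_bot : L ≠ ⊥ := hbotlt.ne'
    have hcoe : ((L.toReal : ℝ) : EReal) = L := EReal.coe_toReal hne_top hne_bot
    refine ⟨L.toReal, ?_, hcoe.symm⟩
    have : Real.exp (-4) ≤ L.toReal := by
      rw [← EReal.coe_le_coe_iff, hcoe]
      exact hge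
    linarith [Real.exp_pos (-4 : ℝ)]
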